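/- Let M be a complete connected Riemannian manifold, (y_m) a sequence in M tending to infinity, and C_m real numbers; set f_m(x) = C_m - d(x, y_m) and assume f_m → f pointwise. If the cut-locus of y_m is empty for every m, then f induces a foliation by transport lines: through every point x ∈ M there passes a transport line of f (a complete minimizing geodesic along which f grows with unit speed). -/

import Mathlib

open Filter Metric Topology

/- STATEMENT 13: Let (y_m) tend to infinity in a complete connected Riemannian
manifold M (encoded metrically; completeness of a Riemannian manifold makes it a
proper metric space), let f_m(x) = C_m - d(x,y_m) converge pointwise to f, and
suppose each y_m has empty cut-locus, i.e. every minimizing segment ending at y_m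
extends backwards indefinitely as a minimizing geodesic (hypothesis `hcut`).  Then
through every point of M there passes a transport line of f: a complete minimizing
geodesic along which f grows with unit speed. -/
theorem foliation_from_empty_cut_locus
    {M : Type*} [MetricSpace M] [ProperSpace M] [ConnectedSpace M]
    (y : ℕ → M) (hy : Tendsto y atTop (Filter.cocompact M))
    (C : ℕ → ℝ) (f : M → ℝ)
    (hf : ∀ x : M, Tendsto (fun m => C m - dist x (y m)) atTop (nhds (f x)))
    (hcut : ∀ m : ℕ, ∀ x : M, ∃ γ : ℝ → M, γ 0 = x ∧ γ (dist x (y m)) = y m ∧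
      ∀ s t : ℝ, s ≤ dist x (y m) → t ≤ dist x (y m) →
        dist (γ s) (γ t) = |s - t|) :
    ∀ x : M, ∃ γ : ℝ → M, γ 0 = x ∧
      (∀ s t : ℝ, dist (γ s) (γ t) = |s - t|) ∧
      (∀ s t : ℝ, f (γ t) - f (γ s) = t - s) := by
  intro x
  choose Γ' h0 hend hiso using fun m => hcut m x
  set d : ℕ → ℝ := fun m => dist x (y m) with hd_def
  have hd0 : ∀ m, 0 ≤ d m := fun m => dist_nonneg
  have hdtop : Tendsto d atTop atTop := by
    have := (tendsto_dist_left_cocompact_atTop x).comp hy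
    exact this
  set Γ : ℕ → ℝ → M := fun m t => Γ' m (min t (d m)) with hΓ
  have hΓdist : ∀ m s t, dist (Γ m s) (Γ m t) = |min s (d m) - min t (d m)| :=
    fun m s t => hiso m _ _ (min_le_right _ _) (min_le_right _ _)
  have hΓ0 : ∀ m, Γ m 0 = x := fun m => by
    simp only [hΓ, min_eq_left (hd0 m), h0 m]
  have hΓball : ∀ m t, Γ m t ∈ closedBall x |t| := by
    intro m t
    have hx : dist (Γ m t) x = |min t (d m)| := by
      have h := hiso m (min t (d m)) 0 (min_le_right _ _) (hd0 m)
      rw [h0 m] at h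
      simpa using h
    rw [mem_closedBall, hx]
    rcases le_total t (d m) with h | h
    · simp [min_eq_left h]
    · rw [min_eq_right h, abs_of_nonneg (hd0 m)]
      exact le_trans h (le_abs_self t)
  set U : Ultrafilter ℕ := Ultrafilter.of atTop with hU
  have hUle : (U : Filter ℕ) ≤ atTop := Ultrafilter.of_le _
  have hconv : ∀ t : ℝ, ∃ a, Tendsto (fun m => Γ m t) (U : Filter ℕ) (𝓝 a) := by
    intro t
    have hc : IsCompact (closedBall x |t|) := isCompact_closedBall x _
    have hle : (U.map (fun m => Γ m t) : Filter M) ≤ 𝓟 (closedBall x |t|) := by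
      rw [Ultrafilter.coe_map, le_principal_iff, mem_map]
      exact univ_mem' (fun m => hΓball m t)
    obtain ⟨a, -, ha⟩ := hc.ultrafilter_le_nhds _ hle
    exact ⟨a, ha⟩
  choose g hg using hconv
  have key : ∀ t : ℝ, Tendsto (fun m => C m - d m) (U : Filter ℕ) (𝓝 (f (g t) - t)) := by
    intro t
    have h1 : Tendsto (fun m => C m - dist (g t) (y m)) (U : Filter ℕ) (𝓝 (f (g t))) :=
      (hf (g t)).mono_left hUle
    have h2 : Tendsto (fun m => dist (g t) (y m) - dist (Γ m t) (y m)) (U : Filter ℕ) (𝓝 0) := by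
      have hd0' : Tendsto (fun m => dist (g t) (Γ m t)) (U : Filter ℕ) (𝓝 0) := by
        have := (tendsto_const_nhds (x := g t) (f := (U : Filter ℕ))).dist (hg t)
        simpa using this
      refine squeeze_zero_norm (fun m => ?_) hd0'
      rw [Real.norm_eq_abs]
      exact abs_dist_sub_le _ _ _
    have h3 : Tendsto (fun m => C m - dist (Γ m t) (y m)) (U : Filter ℕ) (𝓝 (f (g t))) := by
      have h := h1.add h2
      rw [add_zero] at h
      exact h.congr fun m => by ring
    have h4 : (fun m => C m - dist (Γ m t) (y m)) =ᶠ[(U : Filter ℕ)]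
        (fun m => C m - d m + t) := by
      filter_upwards [(hdtop.eventually_ge_atTop t).filter_mono hUle] with m hm
      have hdist : dist (Γ m t) (y m) = d m - t := by
        have h := hiso m (min t (d m)) (d m) (min_le_right _ _) le_rfl
        rw [hend m] at h
        rw [h, min_eq_left hm, abs_of_nonpos (by linarith)]
        ring
      rw [hdist]
      ring
    have h5 := h3.congr' h4
    have h6 := h5.sub_const t
    simpa using h6
  refine ⟨g, ?_, ?_, ?_⟩
  · exact tendsto_nhds_unique ((hg 0).congr fun m => hΓ0 m) tendsto_const_nhds
  · intro s t
    have h1 : Tendsto (fun m => dist (Γ m s) (Γ m t)) (U : Filter ℕ) (𝓝 (dist (g s) (g t))) :=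
      (hg s).dist (hg t)
    have h2 : (fun m => dist (Γ m s) (Γ m t)) =ᶠ[(U : Filter ℕ)] (fun _ => |s - t|) := by
      filter_upwards [((hdtop.eventually_ge_atTop s).and
        (hdtop.eventually_ge_atTop t)).filter_mono hUle] with m hm
      rw [hΓdist, min_eq_left hm.1, min_eq_left hm.2]
    have := tendsto_nhds_unique (h1.congr' h2) tendsto_const_nhds
    rw [this]
  · intro s t
    have := tendsto_nhds_unique (key t) (key s)
    linarith
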